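/- For every branching (directed forest with edges oriented away from roots) B on vertex set [n], there exists a permutation π of [2n] satisfying the nesting condition (for every e with π(e) < π(ē) and every f, π(f) ∈ [π(e), π(ē)] iff π(f̄) ∈ [π(e), π(ē)], where ī = i+n) such that the containment graph G_π (with (i,j) an edge iff the interval of {π(j), π(j+n)} is strictly contained in that of {π(i), π(i+n)}) equals the transitive closure of B. -/

import Mathlib

/-- The complementary element: `ī = i + n` modulo `2n`. -/
def bar (n : ℕ) (e : Fin (2 * n)) : Fin (2 * n) :=
  ⟨(e.val + n) % (2 * n), Nat.mod_lt _ (by have := e.isLt; omega)⟩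

/-- The nesting condition on the permutation `π`. -/
def Nested (n : ℕ) (π : Equiv.Perm (Fin (2 * n))) : Prop :=
  ∀ e f : Fin (2 * n), π e < π (bar n e) →
    ((π e ≤ π f ∧ π f ≤ π (bar n e)) ↔ (π e ≤ π (bar n f) ∧ π (bar n f) ≤ π (bar n e)))

def emb (n : ℕ) (i : Fin n) : Fin (2 * n) := Fin.castLE (by omega) i

def lo (n : ℕ) (π : Equiv.Perm (Fin (2 * n))) (i : Fin n) : Fin (2 * n) :=
  min (π (emb n i)) (π (bar n (emb n i)))

def hi (n : ℕ) (π : Equiv.Perm (Fin (2 * n))) (i : Fin n) : Fin (2 * n) :=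
  max (π (emb n i)) (π (bar n (emb n i)))

/-- The loopless containment graph `G_π`. -/
def Gpi (n : ℕ) (π : Equiv.Perm (Fin (2 * n))) (i j : Fin n) : Prop :=
  i ≠ j ∧ lo n π i < lo n π j ∧ hi n π j < hi n π i

/-- A branching: a directed forest with all in-degrees at most one and no cycles. -/
def IsBranching {α : Type*} (B : α → α → Prop) : Prop :=
  (∀ u v w, B u w → B v w → u = v) ∧ (∀ v, ¬ Relation.TransGen B v v)

namespace Stmt6Aux

open Relation

variable {n : ℕ} {B : Fin n → Fin n → Prop}

/-! ### basic `bar`/`emb` facts -/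

lemma bar_val (e : Fin (2 * n)) :
    (bar n e).val = if e.val < n then e.val + n else e.val - n := by
  have h := e.isLt
  show (e.val + n) % (2 * n) = _
  split
  · exact Nat.mod_eq_of_lt (by omega)
  · rw [Nat.mod_eq_sub_mod (by omega), Nat.mod_eq_of_lt (by omega)]
    omega

lemma bar_bar (e : Fin (2 * n)) : bar n (bar n e) = e := by
  have h := e.isLt
  apply Fin.ext
  rw [bar_val, bar_val]
  split_ifs <;> omega

lemma emb_val (i : Fin n) : (emb n i).val = i.val := rfl

lemma bar_emb_val (i : Fin n) : (bar n (emb n i)).val = i.val + n := by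
  have := i.isLt
  rw [bar_val, emb_val, if_pos this]

lemma emb_injective : Function.Injective (emb n) := fun a b h => by
  have h2 : (emb n a).val = (emb n b).val := congrArg Fin.val h
  exact Fin.ext h2

lemma emb_ne_bar_emb (i j : Fin n) : emb n i ≠ bar n (emb n j) := by
  intro h
  have h1 := congrArg Fin.val h
  rw [emb_val, bar_emb_val] at h1
  have := i.isLt; omega

lemma decomp (x : Fin (2 * n)) : ∃ j : Fin n, x = emb n j ∨ x = bar n (emb n j) := by
  have h := x.isLt
  by_cases hx : x.val < n
  · exact ⟨⟨x.val, hx⟩, Or.inl (Fin.ext rfl)⟩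
  · refine ⟨⟨x.val - n, by omega⟩, Or.inr (Fin.ext ?_)⟩
    rw [bar_emb_val]; simp; omega

/-! ### well-foundedness -/

lemma wf_down (hB : IsBranching B) : WellFounded (fun w v => B v w) := by
  have hirr : ∀ v, ¬ TransGen (Function.swap B) v v := fun v h =>
    hB.2 v (Relation.transGen_swap.mpr h)
  haveI : IsIrrefl (Fin n) (TransGen (Function.swap B)) := ⟨hirr⟩
  exact Subrelation.wf (r := TransGen (Function.swap B)) (fun h => TransGen.single h)
    (Finite.wellFounded_of_trans_of_irrefl (TransGen (Function.swap B)))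

lemma wf_up (hB : IsBranching B) : WellFounded B := by
  haveI : IsIrrefl (Fin n) (TransGen B) := ⟨hB.2⟩
  exact Subrelation.wf (r := TransGen B) (fun h => TransGen.single h)
    (Finite.wellFounded_of_trans_of_irrefl (TransGen B))

/-! ### branching structure lemmas -/

lemma no_desc_parent (hB : IsBranching B) {p w : Fin n} (h : B p w)
    (h2 : ReflTransGen B w p) : False :=
  hB.2 p (TransGen.head' h h2)

lemma comparable (hB : IsBranching B) {u v x : Fin n}
    (hu : ReflTransGen B u x) (hv : ReflTransGen B v x) :
    ReflTransGen B u v ∨ ReflTransGen B v u := by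
  induction hu using ReflTransGen.head_induction_on with
  | refl => exact Or.inr hv
  | @head a c h' _ ih =>
    rcases ih with h | h
    · exact Or.inl (ReflTransGen.head h' h)
    · rcases ReflTransGen.cases_tail h with rfl | ⟨y, hy, hyc⟩
      · exact Or.inl (ReflTransGen.single h')
      · have : a = y := hB.1 a y c h' hyc
        subst this
        exact Or.inr hy

lemma desc_disjoint_children (hB : IsBranching B) {p w1 w2 : Fin n}
    (h1 : B p w1) (h2 : B p w2) (hne : w1 ≠ w2) {x : Fin n}
    (d1 : ReflTransGen B w1 x) (d2 : ReflTransGen B w2 x) : False := by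
  rcases comparable hB d1 d2 with h | h
  · rcases ReflTransGen.cases_tail h with rfl | ⟨y, hy, hyw2⟩
    · exact hne rfl
    · have : p = y := hB.1 p y w2 h2 hyw2
      subst this
      exact no_desc_parent hB h1 hy
  · rcases ReflTransGen.cases_tail h with rfl | ⟨y, hy, hyw1⟩
    · exact hne rfl
    · have : p = y := hB.1 p y w1 h1 hyw1
      subst this
      exact no_desc_parent hB h2 hy

/-! ### the DFS lists -/

open Classical in
noncomputable def children (B : Fin n → Fin n → Prop) (v : Fin n) : List (Fin n) :=
  (Finset.univ.filter (fun w => B v w)).sort (· ≤ ·)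

lemma mem_children {v w : Fin n} : w ∈ children B v ↔ B v w := by
  simp [children, Finset.mem_sort, Finset.mem_filter]

lemma nodup_children (v : Fin n) : (children B v).Nodup := by
  classical exact Finset.sort_nodup _ _

noncomputable def dfs (hB : IsBranching B) : Fin n → List (Fin (2 * n)) :=
  (wf_down hB).fix (fun v ih =>
    emb n v :: ((children B v).attach.flatMap fun w => ih w.1 (mem_children.mp w.2))
      ++ [bar n (emb n v)])

lemma dfs_eq (hB : IsBranching B) (v : Fin n) :
    dfs hB v = emb n v :: (children B v).flatMap (dfs hB) ++ [bar n (emb n v)] := by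
  rw [dfs, WellFounded.fix_eq]
  simp only [List.flatMap_subtype, List.unattach_attach]

lemma mem_dfs (hB : IsBranching B) (v : Fin n) (x : Fin (2 * n)) :
    x ∈ dfs hB v ↔ ∃ u, ReflTransGen B v u ∧ (x = emb n u ∨ x = bar n (emb n u)) := by
  induction v using (wf_down hB).induction with
  | _ v ih =>
    rw [dfs_eq]
    simp only [List.cons_append, List.mem_cons, List.mem_append, List.mem_flatMap,
      List.mem_singleton, List.mem_attach, true_and, List.not_mem_nil, or_false,
      Subtype.exists]
    constructor
    · rintro (rfl | ⟨w, hwc, hx⟩ | rfl)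
      · exact ⟨v, ReflTransGen.refl, Or.inl rfl⟩
      · have hBvw : B v w := mem_children.mp hwc
        rcases (ih w hBvw).mp hx with ⟨u, hru, hxu⟩
        exact ⟨u, ReflTransGen.head hBvw hru, hxu⟩
      · exact ⟨v, ReflTransGen.refl, Or.inr rfl⟩
    · rintro ⟨u, hru, hxu⟩
      rcases ReflTransGen.cases_head hru with rfl | ⟨w, hvw, hwu⟩
      · rcases hxu with rfl | rfl
        · exact Or.inl rfl
        · exact Or.inr (Or.inr rfl)
      · exact Or.inr (Or.inl ⟨w, mem_children.mpr hvw, (ih w hvw).mpr ⟨u, hwu, hxu⟩⟩)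

lemma emb_mem_dfs (hB : IsBranching B) {v j : Fin n} :
    emb n j ∈ dfs hB v ↔ ReflTransGen B v j := by
  rw [mem_dfs]
  constructor
  · rintro ⟨u, hru, h | h⟩
    · rwa [emb_injective h]
    · exact absurd h (emb_ne_bar_emb _ _)
  · intro h; exact ⟨j, h, Or.inl rfl⟩

lemma bar_emb_mem_dfs (hB : IsBranching B) {v j : Fin n} :
    bar n (emb n j) ∈ dfs hB v ↔ ReflTransGen B v j := by
  rw [mem_dfs]
  constructor
  · rintro ⟨u, hru, h | h⟩
    · exact absurd h.symm (emb_ne_bar_emb _ _)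
    · have : emb n j = emb n u := by
        have := congrArg (bar n) h
        rwa [bar_bar, bar_bar] at this
      rwa [emb_injective this]
  · intro h; exact ⟨j, h, Or.inr rfl⟩

lemma common_mem (hB : IsBranching B) {v w : Fin n} {x : Fin (2 * n)}
    (hx1 : x ∈ dfs hB v) (hx2 : x ∈ dfs hB w) :
    ∃ u, ReflTransGen B v u ∧ ReflTransGen B w u := by
  rcases decomp x with ⟨j, rfl | rfl⟩
  · exact ⟨j, (emb_mem_dfs hB).mp hx1, (emb_mem_dfs hB).mp hx2⟩
  · exact ⟨j, (bar_emb_mem_dfs hB).mp hx1, (bar_emb_mem_dfs hB).mp hx2⟩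

lemma not_mem_dfs_child (hB : IsBranching B) {v w : Fin n} (hvw : B v w)
    {x : Fin (2 * n)} (hx : x ∈ dfs hB w)
    (hxv : x = emb n v ∨ x = bar n (emb n v)) : False := by
  have hrtg : ReflTransGen B w v := by
    rcases hxv with rfl | rfl
    · exact (emb_mem_dfs hB).mp hx
    · exact (bar_emb_mem_dfs hB).mp hx
  exact no_desc_parent hB hvw hrtg

lemma disjoint_dfs_children (hB : IsBranching B) {v w1 w2 : Fin n}
    (h1 : B v w1) (h2 : B v w2) (hne : w1 ≠ w2) :
    List.Disjoint (dfs hB w1) (dfs hB w2) := by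
  intro x hx1 hx2
  obtain ⟨u, hu1, hu2⟩ := common_mem hB hx1 hx2
  exact desc_disjoint_children hB h1 h2 hne hu1 hu2

lemma nodup_dfs (hB : IsBranching B) (v : Fin n) : (dfs hB v).Nodup := by
  induction v using (wf_down hB).induction with
  | _ v ih =>
    rw [dfs_eq]
    have hembbar : emb n v ≠ bar n (emb n v) := emb_ne_bar_emb v v
    have hbody : ((children B v).flatMap (dfs hB)).Nodup := by
      rw [List.nodup_flatMap]
      refine ⟨fun w hw => ih w (mem_children.mp hw), ?_⟩
      refine List.Pairwise.imp_of_mem ?_ ((nodup_children v) : _)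
      intro w1 w2 hw1 hw2 hne
      exact disjoint_dfs_children hB (mem_children.mp hw1) (mem_children.mp hw2) hne
    have hvnot : ∀ x, x ∈ (children B v).flatMap (dfs hB) →
        ¬ (x = emb n v ∨ x = bar n (emb n v)) := by
      intro x hx hxv
      rw [List.mem_flatMap] at hx
      obtain ⟨w, hw, hxw⟩ := hx
      exact not_mem_dfs_child hB (mem_children.mp hw) hxw hxv
    rw [List.nodup_append, List.nodup_cons]
    refine ⟨⟨fun h => hvnot _ h (Or.inl rfl), hbody⟩, List.nodup_singleton _, ?_⟩
    intro x hx y hy hx2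
    rw [List.mem_singleton] at hy
    subst hy
    subst hx2
    rw [List.mem_cons] at hx
    rcases hx with h | h
    · exact hembbar h.symm
    · exact hvnot _ h (Or.inr rfl)

/-! ### roots and the full list M -/

open Classical in
noncomputable def roots (B : Fin n → Fin n → Prop) : List (Fin n) :=
  (Finset.univ.filter (fun v => ∀ u, ¬ B u v)).sort (· ≤ ·)

lemma mem_roots {v : Fin n} : v ∈ roots B ↔ ∀ u, ¬ B u v := by
  simp [roots, Finset.mem_sort, Finset.mem_filter]

lemma nodup_roots : (roots B).Nodup := by
  classical exact Finset.sort_nodup _ _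

noncomputable def M (hB : IsBranching B) : List (Fin (2 * n)) :=
  (roots B).flatMap (dfs hB)

lemma exists_root (hB : IsBranching B) (v : Fin n) :
    ∃ r, (∀ u, ¬ B u r) ∧ ReflTransGen B r v := by
  induction v using (wf_up hB).induction with
  | _ v ih =>
    by_cases hroot : ∀ u, ¬ B u v
    · exact ⟨v, hroot, ReflTransGen.refl⟩
    · push_neg at hroot
      obtain ⟨u, hu⟩ := hroot
      obtain ⟨r, hr, hru⟩ := ih u hu
      exact ⟨r, hr, hru.tail hu⟩

lemma mem_M (hB : IsBranching B) (x : Fin (2 * n)) : x ∈ M hB := by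
  obtain ⟨j, hj⟩ := decomp x
  obtain ⟨r, hr, hrj⟩ := exists_root hB j
  rw [M, List.mem_flatMap]
  refine ⟨r, mem_roots.mpr hr, ?_⟩
  rcases hj with rfl | rfl
  · exact (emb_mem_dfs hB).mpr hrj
  · exact (bar_emb_mem_dfs hB).mpr hrj

lemma nodup_M (hB : IsBranching B) : (M hB).Nodup := by
  rw [M, List.nodup_flatMap]
  refine ⟨fun r _ => nodup_dfs hB r, ?_⟩
  refine List.Pairwise.imp_of_mem ?_ (nodup_roots : _)
  intro r1 r2 hr1 hr2 hne x hx1 hx2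
  obtain ⟨u, hu1, hu2⟩ := common_mem hB hx1 hx2
  rcases comparable hB hu1 hu2 with h | h
  · rcases ReflTransGen.cases_tail h with rfl | ⟨y, _, hyr2⟩
    · exact hne rfl
    · exact mem_roots.mp hr2 y hyr2
  · rcases ReflTransGen.cases_tail h with rfl | ⟨y, _, hyr1⟩
    · exact hne rfl
    · exact mem_roots.mp hr1 y hyr1

lemma length_M (hB : IsBranching B) : (M hB).length = 2 * n := by
  classical
  have h1 : (M hB).toFinset = Finset.univ :=
    Finset.eq_univ_iff_forall.mpr fun x => List.mem_toFinset.mpr (mem_M hB x)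
  have h2 := List.toFinset_card_of_nodup (nodup_M hB)
  rw [h1] at h2
  simpa using h2.symm

/-! ### infix structure -/

lemma infix_flatMap_of_mem {α β : Type*} {l : List α} {a : α} (h : a ∈ l)
    (f : α → List β) : f a <:+: l.flatMap f := by
  obtain ⟨s, t, rfl⟩ := List.append_of_mem h
  rw [List.flatMap_append, List.flatMap_cons]
  exact ⟨s.flatMap f, t.flatMap f, by simp [List.append_assoc]⟩

lemma dfs_infix_M (hB : IsBranching B) (v : Fin n) : dfs hB v <:+: M hB := by
  induction v using (wf_up hB).induction with
  | _ v ih =>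
    by_cases hroot : ∀ u, ¬ B u v
    · exact infix_flatMap_of_mem (mem_roots.mpr hroot) _
    · push_neg at hroot
      obtain ⟨u, hu⟩ := hroot
      refine List.IsInfix.trans ?_ (ih u hu)
      rw [dfs_eq hB u]
      have h1 : dfs hB v <:+: (children B u).flatMap (dfs hB) :=
        infix_flatMap_of_mem (mem_children.mpr hu) _
      refine h1.trans ?_
      refine ⟨[emb n u], [bar n (emb n u)], by simp⟩

lemma length_dfs (hB : IsBranching B) (v : Fin n) :
    (dfs hB v).length = ((children B v).flatMap (dfs hB)).length + 2 := by
  rw [dfs_eq]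
  simp [Nat.add_comm]
  omega

lemma two_le_length_dfs (hB : IsBranching B) (v : Fin n) : 2 ≤ (dfs hB v).length := by
  rw [length_dfs]; omega

lemma dfs_getElem_zero (hB : IsBranching B) (v : Fin n)
    (h : 0 < (dfs hB v).length) : (dfs hB v)[0] = emb n v := by
  rw [List.getElem_of_eq (dfs_eq hB v)]
  simp

lemma dfs_getElem_last (hB : IsBranching B) (v : Fin n)
    (h : (dfs hB v).length - 1 < (dfs hB v).length) :
    (dfs hB v)[(dfs hB v).length - 1] = bar n (emb n v) := by
  have he := dfs_eq hB v
  have hlen : (dfs hB v).length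
      = (emb n v :: (children B v).flatMap (dfs hB)).length + 1 := by
    rw [he]; simp
  rw [List.getElem_of_eq he]
  rw [List.getElem_append_right (by omega)]
  simp

end Stmt6Aux

theorem stmt6 (n : ℕ) (B : Fin n → Fin n → Prop) (hB : IsBranching B) :
    ∃ π : Equiv.Perm (Fin (2 * n)), Nested n π ∧
      ∀ i j, Gpi n π i j ↔ Relation.TransGen B i j := by
  classical
  open Stmt6Aux in
  obtain ⟨π, hπ⟩ : ∃ π : Equiv.Perm (Fin (2 * n)),
      ∀ x, (M hB)[(π x).val]'(by rw [length_M hB]; exact (π x).isLt) = x := by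
    set g : Fin (2 * n) → Fin (2 * n) :=
      fun k => (M hB)[k.val]'(by rw [length_M hB]; exact k.isLt) with hg
    have ginj : Function.Injective g := by
      intro a b h
      exact Fin.ext ((nodup_M hB).getElem_inj_iff.mp h)
    have gbij : Function.Bijective g := Finite.injective_iff_bijective.mp ginj
    exact ⟨(Equiv.ofBijective g gbij).symm, fun x =>
      (Equiv.ofBijective g gbij).apply_symm_apply x⟩
  have hπ_eq : ∀ (x : Fin (2 * n)) (k : ℕ) (hk : k < (Stmt6Aux.M hB).length),
      (Stmt6Aux.M hB)[k] = x → (π x).val = k := by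
    intro x k hk h
    have h2 : (Stmt6Aux.M hB)[(π x).val]'(by
        rw [Stmt6Aux.length_M hB]; exact (π x).isLt) = (Stmt6Aux.M hB)[k] := by
      rw [h, hπ x]
    exact (Stmt6Aux.nodup_M hB).getElem_inj_iff.mp h2
  have Hv : ∀ v : Fin n,
      ((π (emb n v)).val < (π (bar n (emb n v))).val) ∧
      ∀ x : Fin (2 * n), (x ∈ Stmt6Aux.dfs hB v ↔
        (π (emb n v)).val ≤ (π x).val ∧ (π x).val ≤ (π (bar n (emb n v))).val) := by
    intro v
    obtain ⟨P, S, hPS⟩ := Stmt6Aux.dfs_infix_M hB v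
    have hlen2 : 2 ≤ (Stmt6Aux.dfs hB v).length := Stmt6Aux.two_le_length_dfs hB v
    have hMlen : (Stmt6Aux.M hB).length
        = P.length + (Stmt6Aux.dfs hB v).length + S.length := by
      rw [← hPS]; simp [List.length_append]; omega
    have hgetD : ∀ m, (hm : m < (Stmt6Aux.dfs hB v).length) →
        (Stmt6Aux.M hB)[P.length + m]'(by omega) = (Stmt6Aux.dfs hB v)[m] := by
      intro m hm
      have h1 : (Stmt6Aux.M hB)[P.length + m]'(by omega)
          = (P ++ Stmt6Aux.dfs hB v ++ S)[P.length + m]'(by rw [hPS]; omega) := by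
        congr 1
        exact hPS.symm
      rw [h1]
      rw [List.getElem_append_left (by simp [List.length_append]; omega)]
      rw [List.getElem_append_right (by omega)]
      congr 1
      omega
    have ho : (π (emb n v)).val = P.length := by
      apply hπ_eq _ _ (by omega)
      have h0 := hgetD 0 (by omega)
      exact h0.trans (Stmt6Aux.dfs_getElem_zero hB v (by omega))
    have hc : (π (bar n (emb n v))).val = P.length + (Stmt6Aux.dfs hB v).length - 1 := by
      have hk : P.length + ((Stmt6Aux.dfs hB v).length - 1)
          = P.length + (Stmt6Aux.dfs hB v).length - 1 := by omega
      rw [← hk]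
      apply hπ_eq _ _ (by omega)
      rw [hgetD _ (by omega)]
      exact Stmt6Aux.dfs_getElem_last hB v (by omega)
    refine ⟨by omega, fun x => ?_⟩
    constructor
    · intro hx
      obtain ⟨m, hm, hDm⟩ := List.getElem_of_mem hx
      have := hπ_eq x (P.length + m) (by omega) (by rw [hgetD m hm]; exact hDm)
      omega
    · rintro ⟨h1, h2⟩
      rw [ho] at h1; rw [hc] at h2
      have hm : (π x).val - P.length < (Stmt6Aux.dfs hB v).length := by omega
      have hmem : (Stmt6Aux.dfs hB v)[(π x).val - P.length]'hm ∈ Stmt6Aux.dfs hB v :=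
        List.getElem_mem _
      have h4 : (π ((Stmt6Aux.dfs hB v)[(π x).val - P.length]'hm)).val
          = P.length + ((π x).val - P.length) :=
        hπ_eq _ _ (by omega) (hgetD _ hm)
      have h5 : π ((Stmt6Aux.dfs hB v)[(π x).val - P.length]'hm) = π x :=
        Fin.ext (by omega)
      exact π.injective h5 ▸ hmem
  have mem_iff : ∀ (v : Fin n) (x : Fin (2 * n)),
      x ∈ Stmt6Aux.dfs hB v ↔ (π (emb n v) ≤ π x ∧ π x ≤ π (bar n (emb n v))) := by
    intro v x
    rw [(Hv v).2 x, Fin.le_def, Fin.le_def]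
  have hlt : ∀ v : Fin n, π (emb n v) < π (bar n (emb n v)) := by
    intro v
    rw [Fin.lt_def]
    exact (Hv v).1
  refine ⟨π, ?_, ?_⟩
  · -- Nested
    intro e f he
    obtain ⟨v, hv | hv⟩ := Stmt6Aux.decomp e
    swap
    · subst hv
      rw [Stmt6Aux.bar_bar] at he
      exact absurd (hlt v) (lt_asymm he)
    subst hv
    rw [← mem_iff v f, ← mem_iff v (bar n f)]
    obtain ⟨j, hj | hj⟩ := Stmt6Aux.decomp f
    · subst hj
      rw [Stmt6Aux.emb_mem_dfs hB, Stmt6Aux.bar_emb_mem_dfs hB]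
    · subst hj
      rw [Stmt6Aux.bar_bar]
      rw [Stmt6Aux.emb_mem_dfs hB, Stmt6Aux.bar_emb_mem_dfs hB]
  · -- Gpi ↔ TransGen
    intro i j
    have hlo : ∀ v, lo n π v = π (emb n v) := fun v =>
      min_eq_left (le_of_lt (hlt v))
    have hhi : ∀ v, hi n π v = π (bar n (emb n v)) := fun v =>
      max_eq_right (le_of_lt (hlt v))
    rw [Gpi, hlo, hlo, hhi, hhi]
    constructor
    · rintro ⟨hne, h1, h2⟩
      have hj : emb n j ∈ Stmt6Aux.dfs hB i := by
        rw [mem_iff]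
        exact ⟨le_of_lt h1, le_of_lt ((hlt j).trans h2)⟩
      have := (Stmt6Aux.emb_mem_dfs hB).mp hj
      rcases Relation.reflTransGen_iff_eq_or_transGen.mp this with h | h
      · exact absurd h.symm hne
      · exact h
    · intro h
      have hne : i ≠ j := fun hij => hB.2 i (hij ▸ h)
      have hrtg : Relation.ReflTransGen B i j := h.to_reflTransGen
      have hj1 := (Stmt6Aux.emb_mem_dfs hB (v := i) (j := j)).mpr hrtg
      have hj2 := (Stmt6Aux.bar_emb_mem_dfs hB (v := i) (j := j)).mpr hrtg
      rw [mem_iff] at hj1 hj2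
      refine ⟨hne, ?_, ?_⟩
      · rcases lt_or_eq_of_le hj1.1 with h' | h'
        · exact h'
        · exact absurd (Stmt6Aux.emb_injective (π.injective (Fin.ext (congrArg Fin.val h')))) hne
      · rcases lt_or_eq_of_le hj2.2 with h' | h'
        · exact h'
        · exfalso
          have := π.injective (Fin.ext (congrArg Fin.val h'))
          have h2 := congrArg (bar n) this
          rw [Stmt6Aux.bar_bar, Stmt6Aux.bar_bar] at h2
          exact hne (Stmt6Aux.emb_injective h2).symm
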